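/- The entropy function η: P(Σ*) → [0,∞] is surjective for every alphabet Σ with at least two letters: for every x ∈ [0,∞] there exists a language L ⊆ Σ* with η(L) = x. -/

import Mathlib

open Filter

def thetaN {α : Type*} (L : Set (List α)) (n : ℕ) (u v : List α) : Prop :=
  ∀ w : List α, w.length ≤ n → ((u ++ w) ∈ L ↔ (v ++ w) ∈ L)

noncomputable def indexN {α : Type*} (L : Set (List α)) (n : ℕ) : ℕ :=
  Nat.card (Quot (thetaN L n))

noncomputable def entropy {α : Type*} (L : Set (List α)) : ENNReal :=
  Filter.limsup (fun n : ℕ => ENNReal.ofReal (Real.logb 2 (indexN L n) / n)) Filter.atTop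

namespace EntropySurj

open scoped Classical

variable {α : Type*}

/-! ### Binary decoding -/

noncomputable def Dv (a : α) : List α → ℕ
  | [] => 0
  | c :: t => (if c = a then 1 else 0) + 2 * Dv a t

lemma Dv_cons (a c : α) (t : List α) :
    Dv a (c :: t) = (if c = a then 1 else 0) + 2 * Dv a t := rfl

lemma Dv_lt (a : α) (l : List α) : Dv a l < 2 ^ l.length := by
  induction l with
  | nil => simp [Dv]
  | cons c t ih =>
    simp only [Dv, List.length_cons, pow_succ]
    split <;> omega

lemma Dv_append (a : α) (p w : List α) :
    Dv a (p ++ w) = Dv a p + 2 ^ p.length * Dv a w := by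
  induction p with
  | nil => simp [Dv]
  | cons c t ih =>
    simp only [List.cons_append, Dv, List.length_cons, pow_succ, List.append_eq]
    rw [ih]; ring

lemma Dv_surj (a b : α) (hab : b ≠ a) (s t : ℕ) (ht : t < 2 ^ s) :
    ∃ w : List α, w.length = s ∧ Dv a w = t := by
  induction s generalizing t with
  | zero =>
    refine ⟨[], rfl, ?_⟩
    simp only [pow_zero, Nat.lt_one_iff] at ht
    simp [Dv, ht]
  | succ s ih =>
    have h2 : 0 < 2 ^ s := Nat.two_pow_pos s
    have ht' : t / 2 < 2 ^ s := by rw [pow_succ] at ht; omega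
    obtain ⟨w, hw, hD⟩ := ih (t / 2) ht'
    by_cases hm : t % 2 = 1
    · refine ⟨a :: w, by simp [hw], ?_⟩
      rw [Dv_cons, hD, if_pos rfl]
      omega
    · refine ⟨b :: w, by simp [hw], ?_⟩
      rw [Dv_cons, hD, if_neg hab]
      omega

/-! ### Finiteness of the quotient -/

lemma thetaN_equivalence (L : Set (List α)) (n : ℕ) : Equivalence (thetaN L n) := by
  constructor
  · intro u w hw; rfl
  · intro u v h w hw; exact (h w hw).symm
  · intro u v z h1 h2 w hw; exact (h1 w hw).trans (h2 w hw)

lemma quot_mk_eq_iff (L : Set (List α)) (n : ℕ) (u v : List α) :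
    Quot.mk (thetaN L n) u = Quot.mk (thetaN L n) v ↔ thetaN L n u v := by
  rw [Quot.eq]
  exact (thetaN_equivalence L n).eqvGen_iff

instance finite_boundedLists [Fintype α] (n : ℕ) : Finite {w : List α // w.length ≤ n} := by
  refine Finite.of_injective (fun w => (fun j : Fin (n+1) => w.1[j.val]?)) ?_
  intro u v h
  ext1
  apply List.ext_getElem?
  intro j
  by_cases hj : j ≤ n
  · exact congrFun h ⟨j, by omega⟩
  · rw [List.getElem?_eq_none (by omega), List.getElem?_eq_none (by omega)]

noncomputable def behMap (L : Set (List α)) (n : ℕ) :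
    Quot (thetaN L n) → ({ w : List α // w.length ≤ n } → Prop) :=
  Quot.lift (fun u => fun w => (u ++ w.1) ∈ L) (by
    intro u v huv
    funext w
    exact propext (huv w.1 w.2))

lemma behMap_injective (L : Set (List α)) (n : ℕ) : Function.Injective (behMap L n) := by
  intro q q'
  refine Quot.induction_on₂ q q' ?_
  intro u v h
  apply Quot.sound
  intro w hw
  have := congrFun h ⟨w, hw⟩
  exact iff_of_eq this

instance finiteQuot [Fintype α] (L : Set (List α)) (n : ℕ) : Finite (Quot (thetaN L n)) :=
  Finite.of_injective _ (behMap_injective L n)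

instance nonemptyQuot (L : Set (List α)) (n : ℕ) : Nonempty (Quot (thetaN L n)) :=
  ⟨Quot.mk _ []⟩

lemma indexN_pos [Fintype α] (L : Set (List α)) (n : ℕ) : 0 < indexN L n :=
  Nat.card_pos

/-- Upper bound on the index via a finite coding of behaviors. -/
lemma indexN_le_of_code [Fintype α] {L : Set (List α)} {n : ℕ} {P : Type} [Finite P]
    (Φ : P → List α → Prop)
    (h : ∀ z : List α, ∃ p, ∀ w, w.length ≤ n → ((z ++ w) ∈ L ↔ Φ p w)) :
    indexN L n ≤ Nat.card P := by
  classical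
  have hF : ∀ p : P, ∃ q : Quot (thetaN L n),
      ∀ z : List α, (∀ w, w.length ≤ n → ((z ++ w) ∈ L ↔ Φ p w)) → q = Quot.mk _ z := by
    intro p
    by_cases hp : ∃ z : List α, ∀ w, w.length ≤ n → ((z ++ w) ∈ L ↔ Φ p w)
    · obtain ⟨z0, hz0⟩ := hp
      refine ⟨Quot.mk _ z0, ?_⟩
      intro z hz
      apply Quot.sound
      intro w hw
      exact (hz0 w hw).trans (hz w hw).symm
    · exact ⟨Quot.mk _ [], fun z hz => absurd ⟨z, hz⟩ hp⟩
  choose F hF using hF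
  refine Nat.card_le_card_of_surjective F ?_
  intro q
  refine Quot.induction_on q ?_
  intro z
  obtain ⟨p, hp⟩ := h z
  exact ⟨p, hF p z hp⟩

/-- Lower bound on the index via a family of distinguishable words. -/
lemma le_indexN_of_sep [Fintype α] {L : Set (List α)} {n : ℕ} {P : Type} [Finite P]
    (g : P → List α)
    (hsep : ∀ p q : P, p ≠ q → ∃ w : List α, w.length ≤ n ∧ ¬ ((g p ++ w ∈ L) ↔ (g q ++ w ∈ L))) :
    Nat.card P ≤ indexN L n := by
  refine Nat.card_le_card_of_injective (fun p => Quot.mk (thetaN L n) (g p)) ?_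
  intro p q h
  by_contra hne
  obtain ⟨w, hw, hne'⟩ := hsep p q hne
  rw [quot_mk_eq_iff] at h
  exact hne' (h w hw)

/-! ### The block languages -/

section Lang

variable (a : α) (ν kk : ℕ → ℕ)

def NNf (i : ℕ) : ℕ := 2 ^ ν i

def TTf (i : ℕ) : ℕ := 2 ^ ν i + ν i

noncomputable def condf (i : ℕ) (z : List α) : Prop :=
  Dv a (z.drop (NNf ν i)) < kk i ∧ z[Dv a (z.drop (NNf ν i))]? = some a

def Langf : Set (List α) := { z | ∃ i, z.length = TTf ν i ∧ condf a ν kk i z }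

lemma TTf_strictMono (hν : StrictMono ν) : StrictMono (TTf ν) := by
  intro i j h
  have h1 := hν h
  have h2 : 2 ^ ν i < 2 ^ ν j := Nat.pow_lt_pow_right one_lt_two h1
  simp only [TTf]
  omega

lemma NNf_le_TTf (i : ℕ) : NNf ν i ≤ TTf ν i := Nat.le_add_right _ _

/-- The separating words for the lower bound. -/
noncomputable def zS (b : α) (i : ℕ) (S : Fin (kk i) → Bool) : List α :=
  (List.range (NNf ν i)).map
    (fun q => if h : q < kk i then (if S ⟨q, h⟩ then a else b) else b)

lemma pow_kk_le_indexN [Fintype α] (b : α) (hab : b ≠ a) (hν : StrictMono ν)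
    (hkN : ∀ j, kk j ≤ NNf ν j) (i n : ℕ) (hn : ν i ≤ n) :
    2 ^ kk i ≤ indexN (Langf a ν kk) n := by
  classical
  have hcard : Nat.card (Fin (kk i) → Bool) = 2 ^ kk i := by
    simp [Nat.card_eq_fintype_card]
  rw [← hcard]
  refine le_indexN_of_sep (fun S => zS a ν kk b i S) ?_
  intro S T hST
  obtain ⟨q, hq⟩ := Function.ne_iff.1 hST
  obtain ⟨w, hwlen, hwD⟩ := Dv_surj a b hab (ν i) q.val (lt_of_lt_of_le q.isLt (hkN i))
  have hlen : ∀ S : Fin (kk i) → Bool, (zS a ν kk b i S).length = NNf ν i := by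
    intro S; simp [zS]
  have key : ∀ S : Fin (kk i) → Bool,
      (zS a ν kk b i S ++ w ∈ Langf a ν kk) ↔ S q = true := by
    intro S
    constructor
    · rintro ⟨j, hjlen, hjc⟩
      have hj : j = i := by
        have : TTf ν j = TTf ν i := by
          rw [← hjlen]
          simp [TTf, List.length_append, hlen S, hwlen, NNf]
        exact (TTf_strictMono ν hν).injective this
      subst hj
      obtain ⟨hc1, hc2⟩ := hjc
      have hdrop : (zS a ν kk b j S ++ w).drop (NNf ν j) = w := by
        conv_lhs => rw [← hlen S]
        exact List.drop_left
      rw [hdrop, hwD] at hc2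
      have hqlt : (q : ℕ) < (zS a ν kk b j S).length := by
        rw [hlen S]; exact lt_of_lt_of_le q.isLt (hkN j)
      rw [List.getElem?_append_left hqlt] at hc2
      simp only [zS, List.getElem?_map, List.getElem?_range (by rw [hlen S] at hqlt; exact hqlt : (q:ℕ) < NNf ν j)] at hc2
      simp only [Option.map_some] at hc2
      rw [dif_pos q.isLt] at hc2
      simp only [Option.some_inj] at hc2
      by_contra hfalse
      simp only [Bool.not_eq_true] at hfalse
      rw [Fin.eta, hfalse] at hc2
      simp at hc2
      exact hab hc2
    · intro hSq
      refine ⟨i, ?_, ?_⟩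
      · simp [TTf, List.length_append, hlen S, hwlen, NNf]
      · have hdrop : (zS a ν kk b i S ++ w).drop (NNf ν i) = w := by
          conv_lhs => rw [← hlen S]
          exact List.drop_left
        constructor
        · rw [hdrop, hwD]; exact q.isLt
        · rw [hdrop, hwD]
          have hqlt : (q : ℕ) < (zS a ν kk b i S).length := by
            rw [hlen S]; exact lt_of_lt_of_le q.isLt (hkN i)
          rw [List.getElem?_append_left hqlt]
          simp only [zS, List.getElem?_map,
            List.getElem?_range (by rw [hlen S] at hqlt; exact hqlt : (q:ℕ) < NNf ν i)]
          simp only [Option.map_some]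
          rw [dif_pos q.isLt]
          simp [Fin.eta, hSq]
  refine ⟨w, by omega, fun hiff => hq ?_⟩
  have h2 : (S q = true) ↔ (T q = true) := ((key S).symm.trans hiff).trans (key T)
  cases hSq : S q <;> cases hTq : T q <;> simp_all

end Lang

/-! ### Entropy basics -/

lemma entropy_empty [Fintype α] : entropy (∅ : Set (List α)) = 0 := by
  have h1 : ∀ n : ℕ, indexN (∅ : Set (List α)) n = 1 := by
    intro n
    rw [indexN, Nat.card_eq_one_iff_unique]
    constructor
    · constructor
      intro q q'
      refine Quot.induction_on₂ q q' ?_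
      intro u v
      apply Quot.sound
      intro w hw
      simp only [Set.mem_empty_iff_false]
    · infer_instance
  have : (fun n : ℕ => ENNReal.ofReal (Real.logb 2 (indexN (∅ : Set (List α)) n) / n))
      = fun _ => 0 := by
    funext n
    rw [h1 n]
    simp
  rw [entropy, this, limsup_const]

lemma le_entropy_of_frequently {L : Set (List α)} {x : ENNReal}
    (h : ∃ᶠ n in atTop, x ≤ ENNReal.ofReal (Real.logb 2 (indexN L n) / n)) :
    x ≤ entropy L :=
  le_limsup_of_frequently_le h

lemma entropy_le_of_eventually {L : Set (List α)} {c : ENNReal}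
    (h : ∀ᶠ n in atTop, ENNReal.ofReal (Real.logb 2 (indexN L n) / n) ≤ c) :
    entropy L ≤ c :=
  limsup_le_of_le (by isBoundedDefault) h

lemma pow_le_logb_indexN [Fintype α] {L : Set (List α)} {n k : ℕ}
    (hk : 2 ^ k ≤ indexN L n) : (k : ℝ) ≤ Real.logb 2 (indexN L n) := by
  have h1 : ((2 : ℝ)) ^ k ≤ (indexN L n : ℝ) := by
    exact_mod_cast hk
  have h2 : (0:ℝ) < 2 ^ k := by positivity
  have h3 : (0:ℝ) < (indexN L n : ℝ) := lt_of_lt_of_le h2 h1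
  have h4 := (Real.logb_le_logb (by norm_num : (1:ℝ) < 2) h2 h3).2 h1
  rwa [Real.logb_pow, Real.logb_self_eq_one (by norm_num), mul_one] at h4

lemma logb_indexN_le [Fintype α] {L : Set (List α)} {n k : ℕ}
    (hk : indexN L n ≤ 2 ^ k) : Real.logb 2 (indexN L n) ≤ (k : ℝ) := by
  have h1 : (indexN L n : ℝ) ≤ (2:ℝ) ^ k := by exact_mod_cast hk
  have h3 : (0:ℝ) < (indexN L n : ℝ) := by
    exact_mod_cast indexN_pos L n
  have h4 := (Real.logb_le_logb (by norm_num : (1:ℝ) < 2) h3 (by positivity)).2 h1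
  rwa [Real.logb_pow, Real.logb_self_eq_one (by norm_num), mul_one] at h4

lemma sq_le_two_pow : ∀ m : ℕ, 4 ≤ m → m ^ 2 ≤ 2 ^ m := by
  intro m hm
  induction m with
  | zero => omega
  | succ m ih =>
    rcases Nat.lt_or_ge m 4 with h4 | h4
    · have h3 : m = 3 := by omega
      subst h3; norm_num
    · have h1 := ih (by omega)
      have h2 : (m + 1) ^ 2 ≤ 2 * m ^ 2 := by nlinarith
      calc (m+1)^2 ≤ 2 * m^2 := h2
        _ ≤ 2 * 2 ^ m := by omega
        _ = 2 ^ (m+1) := by ring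

lemma ceil_growth (r : ℝ) (hr : 0 ≤ r) (n : ℕ) (hn : 1 ≤ n) :
    ∀ m, n ≤ m → ⌈r * m⌉₊ ≤ 2 ^ (m - n) * (⌈r * n⌉₊ + 2) := by
  intro m hm
  induction hm with
  | refl => simpa using Nat.le_add_right _ 2
  | @step m hm ih =>
    have hstep : ⌈r * ((m:ℝ) + 1)⌉₊ ≤ ⌈r * m⌉₊ + ⌈r⌉₊ := by
      calc ⌈r * ((m:ℝ) + 1)⌉₊ = ⌈r * m + r⌉₊ := by ring_nf
        _ ≤ ⌈r * m⌉₊ + ⌈r⌉₊ := Nat.ceil_add_le _ _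
    have hrn : ⌈r⌉₊ ≤ ⌈r * n⌉₊ := by
      apply Nat.ceil_le_ceil
      have h1 : (1:ℝ) ≤ (n:ℝ) := by exact_mod_cast hn
      nlinarith
    have h2 : (m + 1 : ℕ) - n = (m - n) + 1 := Nat.succ_sub hm
    have hpow : (1:ℕ) ≤ 2 ^ (m - n) := Nat.one_le_two_pow
    calc ⌈r * ((m+1 : ℕ) : ℝ)⌉₊ = ⌈r * ((m:ℝ) + 1)⌉₊ := by push_cast; ring_nf
      _ ≤ ⌈r * m⌉₊ + ⌈r⌉₊ := hstep
      _ ≤ 2 ^ (m - n) * (⌈r * n⌉₊ + 2) + (⌈r * n⌉₊ + 2) := by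
          have h5 := ih; have h6 := hrn; omega
      _ ≤ 2 ^ (m - n) * (⌈r * n⌉₊ + 2) + 2 ^ (m - n) * (⌈r * n⌉₊ + 2) := by
          nlinarith [hpow]
      _ = 2 ^ ((m+1) - n) * (⌈r * n⌉₊ + 2) := by rw [h2]; ring

/-! ### The infinite-entropy language -/

lemma entropy_top [Fintype α] (a b : α) (hab : b ≠ a) :
    entropy (Langf a id (fun m => 2 ^ m)) = ⊤ := by
  set L := Langf a id (fun m => 2 ^ m) with hL
  by_contra htop
  have hkey : ∀ m : ℕ, 2 ^ (2 ^ m) ≤ indexN L m := by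
    intro m
    exact pow_kk_le_indexN a id (fun m => 2 ^ m) b hab strictMono_id
      (fun j => le_refl _) m m (le_refl m)
  set C : ℝ := (entropy L).toReal + 1 with hC
  have hfreq : ∀ᶠ m in atTop,
      ENNReal.ofReal C ≤ ENNReal.ofReal (Real.logb 2 (indexN L m) / m) := by
    have hev : ∀ᶠ m : ℕ in atTop, (4 ≤ m ∧ C ≤ (m:ℝ)) := by
      filter_upwards [eventually_ge_atTop 4,
        (tendsto_natCast_atTop_atTop (R := ℝ)).eventually_ge_atTop C] with m h1 h2
      exact ⟨h1, h2⟩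
    filter_upwards [hev] with m hm
    obtain ⟨h4, hCm⟩ := hm
    have hm0 : (0:ℝ) < m := by
      have : (4:ℝ) ≤ (m:ℝ) := by exact_mod_cast h4
      linarith
    have hlogb : ((2 ^ m : ℕ) : ℝ) ≤ Real.logb 2 (indexN L m) :=
      pow_le_logb_indexN (hkey m)
    have hsq : ((m:ℝ))^2 ≤ ((2:ℝ))^m := by exact_mod_cast sq_le_two_pow m h4
    apply ENNReal.ofReal_le_ofReal
    rw [le_div_iff₀ hm0]
    calc C * m ≤ m * m := by nlinarith
      _ = (m:ℝ)^2 := by ring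
      _ ≤ (2:ℝ)^m := hsq
      _ ≤ Real.logb 2 (indexN L m) := by
          have : ((2 ^ m : ℕ) : ℝ) = (2:ℝ)^m := by push_cast; ring
          rw [← this]; exact hlogb
  have hle := le_entropy_of_frequently hfreq.frequently
  have hcontr : entropy L < ENNReal.ofReal C :=
    (ENNReal.lt_ofReal_iff_toReal_lt htop).2 (by rw [hC]; linarith)
  exact absurd hle (not_le.2 hcontr)

/-! ### The finite-entropy construction: upper bound machinery -/

section Upper

variable (a : α) (r : ℝ)

def νr (i : ℕ) : ℕ := 2 ^ (i + 4)

lemma νr_strictMono : StrictMono νr := fun i j h =>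
  Nat.pow_lt_pow_right one_lt_two (by omega)

lemma lt_νr (i : ℕ) : i < νr i := lt_of_lt_of_le (Nat.lt_two_pow_self)
  (Nat.pow_le_pow_right (by norm_num) (by omega))

noncomputable def kkr (i : ℕ) : ℕ := min ⌈r * (νr i : ℝ)⌉₊ (2 ^ νr i)

lemma kkr_le_NNf (i : ℕ) : kkr r i ≤ NNf νr i := min_le_right _ _

/-- Behavior codes: a level (length of witness), an optional "case A" block index,
and a window bit vector. -/
abbrev Entry (n cap : ℕ) : Type :=
  (Fin (n+1)) × (Option (Fin (Nat.log 2 n + 1))) × (Fin cap → Bool)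

noncomputable def decodeE (n cap : ℕ) (e : Entry n cap) (w : List α) : Prop :=
  e.2.1.elim
    (∃ h : Dv a w < cap, e.2.2 ⟨Dv a w, h⟩ = true)
    (fun i =>
      let j := Dv a (w.drop (e.1.val - νr i.val))
      j < kkr r i.val ∧
        (if j < TTf νr i.val - e.1.val then
            (∃ h : j < cap, e.2.2 ⟨j, h⟩ = true)
         else w[j - (TTf νr i.val - e.1.val)]? = some a))

noncomputable def mkEntry (n : ℕ) (z : List α) (i cap : ℕ)
    (h1 : z.length ≤ TTf νr i) (h2 : TTf νr i ≤ z.length + n) : Entry n cap :=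
  ⟨⟨TTf νr i - z.length, by omega⟩,
   if hA : z.length < NNf νr i then
     some ⟨i, by
       have hTT : TTf νr i = NNf νr i + νr i := rfl
       have hν : νr i < n := by omega
       have hn0 : n ≠ 0 := by omega
       have h16 : (2:ℕ) ^ (i+4) ≤ n := le_of_lt hν
       have hlog := (Nat.le_log_iff_pow_le one_lt_two hn0).2 h16
       omega⟩
   else none,
   fun t => if z.length < NNf νr i then decide (z[t.val]? = some a)
     else decide
       (Dv a (z.drop (NNf νr i)) + 2 ^ (νr i - (TTf νr i - z.length)) * t.val < kkr r i ∧
        z[Dv a (z.drop (NNf νr i)) + 2 ^ (νr i - (TTf νr i - z.length)) * t.val]?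
          = some a)⟩

lemma decode_mkEntry (n : ℕ) (z : List α) (i cap : ℕ)
    (h1 : z.length ≤ TTf νr i) (h2 : TTf νr i ≤ z.length + n)
    (hcapB : NNf νr i ≤ z.length → kkr r i ≤ 2 ^ (νr i - (TTf νr i - z.length)) * cap)
    (hcapA : z.length < NNf νr i → kkr r i ≤ cap)
    (w : List α) (hw : w.length = TTf νr i - z.length) :
    (condf a νr (kkr r) i (z ++ w) ↔ decodeE a r n cap (mkEntry a r n z i cap h1 h2) w) := by
  have hTT : TTf νr i = NNf νr i + νr i := rfl
  by_cases hA : z.length < NNf νr i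
  · -- Case A : the block starts beyond `z`
    have hdropzw : (z ++ w).drop (NNf νr i) = w.drop (NNf νr i - z.length) := by
      rw [List.drop_append, List.drop_eq_nil_of_le (le_of_lt hA),
        List.nil_append]
    have hamt : TTf νr i - z.length - νr i = NNf νr i - z.length := by omega
    set j := Dv a (w.drop (NNf νr i - z.length)) with hj
    have hcond : condf a νr (kkr r) i (z ++ w) ↔
        (j < kkr r i ∧ (z ++ w)[j]? = some a) := by
      rw [condf, hdropzw]
    rw [hcond]
    simp only [decodeE, mkEntry, dif_pos hA, Option.elim, hamt]
    rw [← hj]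
    rw [show TTf νr i - (TTf νr i - z.length) = z.length by omega]
    apply and_congr_right
    intro hjk
    by_cases hjl : j < z.length
    · rw [List.getElem?_append_left hjl, if_pos hjl, if_pos hA]
      have hjcap : j < cap := lt_of_lt_of_le hjk (hcapA hA)
      constructor
      · intro hz
        exact ⟨hjcap, by simpa using hz⟩
      · rintro ⟨h, hd⟩
        simpa using hd
    · rw [List.getElem?_append_right (by omega), if_neg hjl]
  · -- Case B : the block starts inside `z`
    push_neg at hA
    have hdropzw : (z ++ w).drop (NNf νr i) = z.drop (NNf νr i) ++ w := by
      rw [List.drop_append,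
        show NNf νr i - z.length = 0 by omega, List.drop_zero]
    have hlendrop : (z.drop (NNf νr i)).length = νr i - (TTf νr i - z.length) := by
      rw [List.length_drop]; omega
    set c := Dv a (z.drop (NNf νr i)) with hc
    set g := 2 ^ (νr i - (TTf νr i - z.length)) with hg
    have hDv : Dv a ((z ++ w).drop (NNf νr i)) = c + g * Dv a w := by
      rw [hdropzw, Dv_append, hlendrop]
    have hcond : condf a νr (kkr r) i (z ++ w) ↔
        (c + g * Dv a w < kkr r i ∧ (z ++ w)[c + g * Dv a w]? = some a) := by
      rw [condf, hDv]
    rw [hcond]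
    simp only [decodeE, mkEntry, dif_neg (by omega : ¬ z.length < NNf νr i), Option.elim]
    constructor
    · rintro ⟨hlt, hget⟩
      have hzget : (z ++ w)[c + g * Dv a w]? = z[c + g * Dv a w]? := by
        apply List.getElem?_append_left
        have : kkr r i ≤ NNf νr i := kkr_le_NNf r i
        omega
      have hwcap : Dv a w < cap := by
        have h5 : g * Dv a w < g * cap :=
          lt_of_le_of_lt (Nat.le_add_left _ c) (lt_of_lt_of_le hlt (hcapB hA))
        exact Nat.lt_of_mul_lt_mul_left h5
      refine ⟨hwcap, ?_⟩
      rw [if_neg (by omega : ¬ z.length < NNf νr i)]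
      rw [hzget] at hget
      rw [decide_eq_true_iff]
      exact ⟨hlt, hget⟩
    · rintro ⟨hwcap, hd⟩
      rw [if_neg (by omega : ¬ z.length < NNf νr i)] at hd
      rw [decide_eq_true_iff] at hd
      obtain ⟨hlt, hget⟩ := hd
      rw [← hc, ← hg] at hlt hget
      refine ⟨hlt, ?_⟩
      have hzget : (z ++ w)[c + g * Dv a w]? = z[c + g * Dv a w]? := by
        apply List.getElem?_append_left
        have : kkr r i ≤ NNf νr i := kkr_le_NNf r i
        omega
      rw [hzget]
      exact hget

end Upper

section Upper2

variable (a : α) (r : ℝ)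

lemma gap_lemma (n ℓ i i' : ℕ)
    (hi1 : ℓ ≤ TTf νr i) (hi'2 : TTf νr i' ≤ ℓ + n) (hii : i < i') :
    NNf νr i ≤ n := by
  have hmono : TTf νr (i+1) ≤ TTf νr i' :=
    (TTf_strictMono νr νr_strictMono).monotone (by omega)
  have hNN : NNf νr (i+1) = NNf νr i * NNf νr i := by
    have h5 : νr (i+1) = νr i + νr i := by
      simp only [νr]
      rw [show i + 1 + 4 = (i+4) + 1 by ring, pow_succ]
      ring
    simp only [NNf, h5, pow_add]
  have h2 : 2 ≤ NNf νr i := by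
    have h1 : 1 ≤ νr i := Nat.one_le_two_pow
    calc 2 = 2^1 := rfl
      _ ≤ 2 ^ νr i := Nat.pow_le_pow_right (by norm_num) h1
  have hν : νr i ≤ νr (i+1) := le_of_lt (νr_strictMono (by omega))
  have hmul : 2 * NNf νr i ≤ NNf νr i * NNf νr i := Nat.mul_le_mul_right _ h2
  have hTTi : TTf νr i = NNf νr i + νr i := rfl
  have hTTi1 : TTf νr (i+1) = NNf νr (i+1) + νr (i+1) := rfl
  have hνNN : νr i ≤ NNf νr i := le_of_lt (Nat.lt_two_pow_self)
  omega

noncomputable def Wb (n : ℕ) : ℕ := ⌈r * (n:ℝ)⌉₊ + 2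

noncomputable def Lbb (n : ℕ) : ℕ := ⌈r * ((Nat.log 2 n : ℕ):ℝ)⌉₊ + 2

lemma capA (hr : 0 ≤ r) (n i : ℕ) (hν : νr i ≤ n) : kkr r i ≤ Wb r n := by
  have h1 : kkr r i ≤ ⌈r * (νr i : ℝ)⌉₊ := min_le_left _ _
  have h2 : ⌈r * (νr i : ℝ)⌉₊ ≤ ⌈r * (n:ℝ)⌉₊ := by
    apply Nat.ceil_le_ceil
    have : (νr i : ℝ) ≤ (n : ℝ) := by exact_mod_cast hν
    nlinarith
  simp only [Wb]; omega

lemma capB (hr : 0 ≤ r) (n i ℓ : ℕ) (hn : 1 ≤ n)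
    (hNN : NNf νr i ≤ ℓ) (hl : ℓ ≤ TTf νr i) (hl2 : TTf νr i ≤ ℓ + n) :
    kkr r i ≤ 2 ^ (νr i - (TTf νr i - ℓ)) * Wb r n := by
  have hone : 1 ≤ 2 ^ (νr i - (TTf νr i - ℓ)) := Nat.one_le_two_pow
  by_cases hν : νr i ≤ n
  · have h1 := capA r hr n i hν
    calc kkr r i ≤ Wb r n := h1
      _ ≤ 2 ^ (νr i - (TTf νr i - ℓ)) * Wb r n := Nat.le_mul_of_pos_left _ (by omega)
  · push_neg at hν
    have hTT : TTf νr i = NNf νr i + νr i := rfl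
    have hs : TTf νr i - ℓ ≤ n := by omega
    have h1 : kkr r i ≤ ⌈r * (νr i : ℝ)⌉₊ := min_le_left _ _
    have h2 : ⌈r * ((νr i : ℕ):ℝ)⌉₊ ≤ 2 ^ (νr i - n) * (⌈r * (n:ℝ)⌉₊ + 2) :=
      ceil_growth r hr n hn (νr i) (le_of_lt hν)
    have h3 : (2:ℕ) ^ (νr i - n) ≤ 2 ^ (νr i - (TTf νr i - ℓ)) :=
      Nat.pow_le_pow_right (by norm_num) (by omega)
    calc kkr r i ≤ 2 ^ (νr i - n) * (⌈r * (n:ℝ)⌉₊ + 2) := le_trans h1 h2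
      _ ≤ 2 ^ (νr i - (TTf νr i - ℓ)) * (⌈r * (n:ℝ)⌉₊ + 2) :=
          Nat.mul_le_mul_right _ h3
      _ = 2 ^ (νr i - (TTf νr i - ℓ)) * Wb r n := rfl

lemma capL (hr : 0 ≤ r) (n i : ℕ) (hn : 1 ≤ n) (hNN : NNf νr i ≤ n) :
    kkr r i ≤ Lbb r n := by
  have hlog : νr i ≤ Nat.log 2 n :=
    (Nat.le_log_iff_pow_le one_lt_two (by omega)).2 hNN
  have h1 : kkr r i ≤ ⌈r * (νr i : ℝ)⌉₊ := min_le_left _ _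
  have h2 : ⌈r * (νr i : ℝ)⌉₊ ≤ ⌈r * ((Nat.log 2 n : ℕ):ℝ)⌉₊ := by
    apply Nat.ceil_le_ceil
    have : (νr i : ℝ) ≤ ((Nat.log 2 n : ℕ) : ℝ) := by exact_mod_cast hlog
    nlinarith
  simp only [Lbb]; omega

/-- The full behavior-code type for the upper bound. -/
abbrev Pn (n : ℕ) : Type :=
  Option (Entry n (Wb r n)) ×
    (Fin (Nat.log 2 n + 1) → Option (Entry n (Lbb r n)))

noncomputable def Φn (n : ℕ) (p : Pn r n) (w : List α) : Prop :=
  (∃ e, p.1 = some e ∧ e.1.val = w.length ∧ decodeE a r n (Wb r n) e w) ∨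
  (∃ (j : Fin (Nat.log 2 n + 1)) (e : Entry n (Lbb r n)),
      p.2 j = some e ∧ e.1.val = w.length ∧ decodeE a r n (Lbb r n) e w)

lemma determination (hr : 0 < r) (n : ℕ) (hn : 1 ≤ n) (z : List α) :
    ∃ p : Pn r n, ∀ w : List α, w.length ≤ n →
      ((z ++ w) ∈ Langf a νr (kkr r) ↔ Φn a r n p w) := by
  classical
  set act : ℕ → Prop := fun i => z.length ≤ TTf νr i ∧ TTf νr i ≤ z.length + n with hact
  have hbound : ∀ i, act i → i ≤ z.length + n := by
    intro i hi
    have h1 : i < νr i := lt_νr i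
    have h2 : νr i ≤ TTf νr i := Nat.le_add_left _ _
    have := hi.2
    omega
  set itop := Nat.findGreatest act (z.length + n) with hitop
  refine ⟨⟨if h : act itop then some (mkEntry a r n z itop (Wb r n) h.1 h.2) else none,
    fun j => if h : act j.val ∧ j.val < itop then
      some (mkEntry a r n z j.val (Lbb r n) h.1.1 h.1.2) else none⟩, ?_⟩
  intro w hw
  have hIBlem : ∀ i, NNf νr i ≤ n → i < Nat.log 2 n + 1 := by
    intro i hgap
    have h1 : νr i ≤ Nat.log 2 n :=
      (Nat.le_log_iff_pow_le one_lt_two (by omega)).2 hgap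
    have := lt_νr i
    omega
  constructor
  · rintro ⟨i, hilen, hicond⟩
    rw [List.length_append] at hilen
    have hact_i : act i := ⟨by omega, by omega⟩
    have hi_le : i ≤ itop := Nat.le_findGreatest (hbound i hact_i) hact_i
    rcases eq_or_lt_of_le hi_le with heq | hlt
    · rw [heq] at hilen hicond hact_i
      left
      rw [dif_pos hact_i]
      refine ⟨mkEntry a r n z itop (Wb r n) hact_i.1 hact_i.2, rfl, by
        show TTf νr itop - z.length = w.length
        omega, ?_⟩
      refine (decode_mkEntry a r n z itop (Wb r n) hact_i.1 hact_i.2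
        (fun hNN => capB r hr.le n itop z.length hn hNN hact_i.1 hact_i.2)
        (fun hA => capA r hr.le n itop (by
          have hTT : TTf νr itop = NNf νr itop + νr itop := rfl
          omega)) w (by omega)).1 hicond
    · right
      have hacttop : act itop := Nat.findGreatest_spec (hbound i hact_i) hact_i
      have hgap : NNf νr i ≤ n := gap_lemma n z.length i itop hact_i.1 hacttop.2 hlt
      refine ⟨⟨i, hIBlem i hgap⟩, mkEntry a r n z i (Lbb r n) hact_i.1 hact_i.2, ?_, by
        show TTf νr i - z.length = w.length
        omega, ?_⟩
      · exact dif_pos ⟨hact_i, hlt⟩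
      · refine (decode_mkEntry a r n z i (Lbb r n) hact_i.1 hact_i.2
          (fun hNN => le_trans (capL r hr.le n i hn hgap)
            (Nat.le_mul_of_pos_left _ (by positivity)))
          (fun hA => capL r hr.le n i hn hgap) w (by omega)).1 hicond
  · rintro (⟨e, he, hlen, hdec⟩ | ⟨j, e, he, hlen, hdec⟩)
    · by_cases h : act itop
      · have he2 : (if h' : act itop then
            some (mkEntry a r n z itop (Wb r n) h'.1 h'.2) else none) = some e := he
        rw [dif_pos h] at he2
        have he' := (Option.some_inj.1 he2).symm
        subst he'
        have hlen' : TTf νr itop - z.length = w.length := hlen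
        refine ⟨itop, by rw [List.length_append]; omega, ?_⟩
        refine (decode_mkEntry a r n z itop (Wb r n) h.1 h.2
          (fun hNN => capB r hr.le n itop z.length hn hNN h.1 h.2)
          (fun hA => capA r hr.le n itop (by
            have hTT : TTf νr itop = NNf νr itop + νr itop := rfl
            omega)) w (by omega)).2 hdec
      · have he2 : (if h' : act itop then
            some (mkEntry a r n z itop (Wb r n) h'.1 h'.2) else none) = some e := he
        rw [dif_neg h] at he2
        exact absurd he2 (by simp)
    · by_cases h : act j.val ∧ j.val < itop
      · have he2 : (if h' : act j.val ∧ j.val < itop then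
            some (mkEntry a r n z j.val (Lbb r n) h'.1.1 h'.1.2) else none) = some e := he
        rw [dif_pos h] at he2
        have he' := (Option.some_inj.1 he2).symm
        subst he'
        have hacttop : act itop := Nat.findGreatest_spec (hbound j.val h.1) h.1
        have hgap : NNf νr j.val ≤ n :=
          gap_lemma n z.length j.val itop h.1.1 hacttop.2 h.2
        have hlen' : TTf νr j.val - z.length = w.length := hlen
        refine ⟨j.val, by rw [List.length_append]; have := h.1.1; omega, ?_⟩
        refine (decode_mkEntry a r n z j.val (Lbb r n) h.1.1 h.1.2
          (fun hNN => le_trans (capL r hr.le n j.val hn hgap)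
            (Nat.le_mul_of_pos_left _ (by positivity)))
          (fun hA => capL r hr.le n j.val hn hgap) w (by omega)).2 hdec
      · have he2 : (if h' : act j.val ∧ j.val < itop then
            some (mkEntry a r n z j.val (Lbb r n) h'.1.1 h'.1.2) else none) = some e := he
        rw [dif_neg h] at he2
        exact absurd he2 (by simp)

end Upper2

section Upper3

variable (a : α) (r : ℝ)

noncomputable def Mb (n : ℕ) : ℕ :=
  (Wb r n + 2 * Nat.log 2 n + 5) + (Nat.log 2 n + 1) * (Lbb r n + 2 * Nat.log 2 n + 5)

lemma card_entry_le (n cap : ℕ) :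
    Nat.card (Entry n cap) + 1 ≤ 2 ^ (cap + 2 * Nat.log 2 n + 5) := by
  have hc : Nat.card (Entry n cap) = (n+1) * ((Nat.log 2 n + 1 + 1) * 2 ^ cap) := by
    simp [Entry, Nat.card_eq_fintype_card]
  have h1 : n + 1 ≤ 2 ^ (Nat.log 2 n + 1) := Nat.lt_pow_succ_log_self one_lt_two n
  have h2 : Nat.log 2 n + 2 ≤ 2 ^ (Nat.log 2 n + 2) := le_of_lt (Nat.lt_two_pow_self)
  have h3 : (n+1) * ((Nat.log 2 n + 1 + 1) * 2 ^ cap)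
      ≤ 2 ^ (Nat.log 2 n + 1) * (2 ^ (Nat.log 2 n + 2) * 2 ^ cap) := by
    apply Nat.mul_le_mul h1
    apply Nat.mul_le_mul_right
    omega
  have h4 : 2 ^ (Nat.log 2 n + 1) * (2 ^ (Nat.log 2 n + 2) * 2 ^ cap)
      = 2 ^ (cap + 2 * Nat.log 2 n + 3) := by
    rw [← pow_add, ← pow_add]
    congr 1
    ring
  have h5 : (1:ℕ) ≤ 2 ^ (cap + 2 * Nat.log 2 n + 3) := Nat.one_le_two_pow
  have h6 : 2 ^ (cap + 2 * Nat.log 2 n + 3) + 2 ^ (cap + 2 * Nat.log 2 n + 3)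
      = 2 ^ (cap + 2 * Nat.log 2 n + 4) := by
    rw [← two_mul, ← pow_succ']
  have h7 : (2:ℕ) ^ (cap + 2 * Nat.log 2 n + 4) ≤ 2 ^ (cap + 2 * Nat.log 2 n + 5) :=
    Nat.pow_le_pow_right (by norm_num) (by omega)
  omega

lemma card_Pn_le (n : ℕ) : Nat.card (Pn r n) ≤ 2 ^ Mb r n := by
  have hP : Nat.card (Pn r n) = (Nat.card (Entry n (Wb r n)) + 1) *
      (Nat.card (Entry n (Lbb r n)) + 1) ^ (Nat.log 2 n + 1) := by
    simp [Pn, Nat.card_eq_fintype_card, Fintype.card_option]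
  rw [hP, Mb]
  calc (Nat.card (Entry n (Wb r n)) + 1) *
      (Nat.card (Entry n (Lbb r n)) + 1) ^ (Nat.log 2 n + 1)
      ≤ 2 ^ (Wb r n + 2 * Nat.log 2 n + 5) *
        (2 ^ (Lbb r n + 2 * Nat.log 2 n + 5)) ^ (Nat.log 2 n + 1) :=
        Nat.mul_le_mul (card_entry_le n _) (Nat.pow_le_pow_left (card_entry_le n _) _)
    _ = 2 ^ ((Wb r n + 2 * Nat.log 2 n + 5) +
        (Nat.log 2 n + 1) * (Lbb r n + 2 * Nat.log 2 n + 5)) := by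
        rw [← pow_mul, ← pow_add]
        congr 1
        ring

lemma indexN_le_Mb [Fintype α] (hr : 0 < r) (n : ℕ) (hn : 1 ≤ n) :
    indexN (Langf a νr (kkr r)) n ≤ 2 ^ Mb r n :=
  le_trans (indexN_le_of_code (Φn a r n) (determination a r hr n hn)) (card_Pn_le r n)

lemma quart_le_two_pow : ∀ m : ℕ, 16 ≤ m → m ^ 4 ≤ 2 ^ m := by
  intro m hm
  induction m with
  | zero => omega
  | succ m ih =>
    rcases Nat.lt_or_ge m 16 with h | h
    · have h15 : m = 15 := by omega
      subst h15; norm_num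
    · have h1 := ih (by omega)
      have a1 : 16 * m^3 ≤ m * m^3 := Nat.mul_le_mul_right _ h
      have a2 : 16 * m^2 ≤ m * m^2 := Nat.mul_le_mul_right _ h
      have a3 : 1 ≤ m := by omega
      have a4 : m ≤ m^2 := by nlinarith
      have h2 : (m+1)^4 ≤ 2 * m^4 := by nlinarith [a1, a2, a4]
      calc (m+1)^4 ≤ 2 * m^4 := h2
        _ ≤ 2 * 2^m := by omega
        _ = 2^(m+1) := by ring

lemma poly_le_two_pow (K : ℕ) : ∃ M : ℕ, ∀ m, M ≤ m → K * (m + 4)^2 ≤ 2 ^ m := by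
  refine ⟨16 + 4 * K, ?_⟩
  intro m hm
  have h16 : 16 ≤ m := by omega
  have h1 : m ^ 4 ≤ 2 ^ m := quart_le_two_pow m h16
  have h2 : (m+4)^2 ≤ 4 * m^2 := by nlinarith
  have h3 : K * (4 * m^2) ≤ m * m^2 := by nlinarith
  have h4 : m * m^2 ≤ m^4 := by nlinarith
  nlinarith

lemma Mb_le (hr : 0 < r) (n : ℕ) (hn : 1 ≤ n) :
    (Mb r n : ℝ) ≤ r * n + (r + 20) * ((Nat.log 2 n : ℝ) + 4)^2 := by
  have hWb : (Wb r n : ℝ) ≤ r * n + 3 := by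
    simp only [Wb]
    push_cast
    have := Nat.ceil_lt_add_one (show 0 ≤ r * (n:ℝ) by positivity)
    linarith
  have hLb : (Lbb r n : ℝ) ≤ r * (Nat.log 2 n : ℝ) + 3 := by
    simp only [Lbb]
    push_cast
    have := Nat.ceil_lt_add_one (show 0 ≤ r * ((Nat.log 2 n : ℕ):ℝ) by positivity)
    linarith
  have hG0 : (0:ℝ) ≤ (Nat.log 2 n : ℝ) := Nat.cast_nonneg _
  have hmul : ((Nat.log 2 n : ℝ)+1) * (Lbb r n : ℝ)
      ≤ ((Nat.log 2 n : ℝ)+1) * (r * (Nat.log 2 n : ℝ) + 3) :=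
    mul_le_mul_of_nonneg_left hLb (by linarith)
  simp only [Mb]
  push_cast
  nlinarith [hWb, hmul, hG0, hr.le]

lemma entropy_fin_le [Fintype α] (hr : 0 < r) :
    entropy (Langf a νr (kkr r)) ≤ ENNReal.ofReal r := by
  apply ENNReal.le_of_forall_pos_le_add
  intro ε hε _
  have hεR : (0:ℝ) < (ε:ℝ) := hε
  obtain ⟨K, hK1⟩ : ∃ K : ℕ, (r + 20) ≤ (ε:ℝ) * K := by
    obtain ⟨K0, hK0⟩ := exists_nat_ge ((r+20)/(ε:ℝ))
    refine ⟨K0, ?_⟩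
    rw [div_le_iff₀ hεR] at hK0
    linarith
  obtain ⟨M, hM⟩ := poly_le_two_pow K
  have hev : ∀ᶠ n : ℕ in atTop,
      ENNReal.ofReal (Real.logb 2 (indexN (Langf a νr (kkr r)) n)/n)
        ≤ ENNReal.ofReal r + (ε : ENNReal) := by
    filter_upwards [eventually_ge_atTop (2^M), eventually_ge_atTop 1] with n hnM hn1
    have hGM : M ≤ Nat.log 2 n := (Nat.le_log_iff_pow_le one_lt_two (by omega)).2 hnM
    have hKG : K * (Nat.log 2 n + 4)^2 ≤ 2 ^ Nat.log 2 n := hM _ hGM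
    have h2G : 2 ^ Nat.log 2 n ≤ n := Nat.pow_log_le_self 2 (by omega)
    have hKn : K * (Nat.log 2 n + 4)^2 ≤ n := le_trans hKG h2G
    have hre : (r + 20) * ((Nat.log 2 n : ℝ)+4)^2 ≤ (ε:ℝ) * n := by
      have hcast : (K:ℝ) * ((Nat.log 2 n : ℝ)+4)^2 ≤ (n:ℝ) := by
        have h0 : ((K * (Nat.log 2 n + 4)^2 : ℕ) : ℝ) ≤ ((n:ℕ):ℝ) := Nat.cast_le.2 hKn
        calc (K:ℝ) * ((Nat.log 2 n : ℝ)+4)^2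
            = ((K * (Nat.log 2 n + 4)^2 : ℕ) : ℝ) := by push_cast; ring
          _ ≤ (n:ℝ) := h0
      nlinarith [sq_nonneg ((Nat.log 2 n : ℝ)+4)]
    have hMbr := Mb_le r hr n hn1
    have hMb2 : (Mb r n : ℝ) ≤ (r + (ε:ℝ)) * n := by nlinarith
    have hlogb : Real.logb 2 (indexN (Langf a νr (kkr r)) n) ≤ (Mb r n : ℝ) :=
      logb_indexN_le (indexN_le_Mb a r hr n hn1)
    have hn0 : (0:ℝ) < n := by exact_mod_cast hn1
    have hdiv : Real.logb 2 (indexN (Langf a νr (kkr r)) n)/n ≤ r + (ε:ℝ) := by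
      rw [div_le_iff₀ hn0]
      nlinarith
    calc ENNReal.ofReal (Real.logb 2 (indexN (Langf a νr (kkr r)) n)/n)
        ≤ ENNReal.ofReal (r + (ε:ℝ)) := ENNReal.ofReal_le_ofReal hdiv
      _ = ENNReal.ofReal r + ENNReal.ofReal (ε:ℝ) := ENNReal.ofReal_add hr.le (by positivity)
      _ = ENNReal.ofReal r + (ε : ENNReal) := by rw [ENNReal.ofReal_coe_nnreal]
  exact entropy_le_of_eventually hev

lemma entropy_fin_ge [Fintype α] (b : α) (hab : b ≠ a) (hr : 0 < r) :
    ENNReal.ofReal r ≤ entropy (Langf a νr (kkr r)) := by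
  apply le_entropy_of_frequently
  rw [frequently_atTop]
  intro N
  obtain ⟨i1, hi1⟩ := exists_nat_ge (r + 1)
  set i := max N (max 4 i1) with hidef
  refine ⟨νr i, ?_, ?_⟩
  · have h1 : i < νr i := lt_νr i
    have h2 : N ≤ i := le_max_left _ _
    omega
  · have hm_i : i ≤ νr i := le_of_lt (lt_νr i)
    have hi4 : 4 ≤ i := le_trans (le_max_left _ _) (le_max_right N _)
    have hii1 : i1 ≤ i := le_trans (le_max_right _ _) (le_max_right N _)
    have hr1 : r + 1 ≤ (νr i : ℝ) := by
      have : (i1:ℝ) ≤ (νr i : ℝ) := by exact_mod_cast le_trans hii1 hm_i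
      linarith
    have hm4 : 4 ≤ νr i := le_trans hi4 hm_i
    have hceil : ⌈r * ((νr i : ℕ):ℝ)⌉₊ ≤ 2 ^ νr i := by
      have h1 : (⌈r * ((νr i : ℕ):ℝ)⌉₊ : ℝ) < r * (νr i : ℝ) + 1 :=
        Nat.ceil_lt_add_one (by positivity)
      have h2 : r * (νr i : ℝ) + 1 ≤ (νr i : ℝ) * (νr i : ℝ) := by nlinarith
      have h3 : ((νr i : ℝ)) * (νr i : ℝ) ≤ ((2 ^ νr i : ℕ) : ℝ) := by
        have h4 := sq_le_two_pow (νr i) hm4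
        have h5 : (((νr i)^2 : ℕ) : ℝ) ≤ ((2 ^ νr i : ℕ) : ℝ) := by exact_mod_cast h4
        push_cast at h5 ⊢
        nlinarith
      have h6 : (⌈r * ((νr i : ℕ):ℝ)⌉₊ : ℝ) < ((2 ^ νr i : ℕ) : ℝ) := by linarith
      exact_mod_cast le_of_lt h6
    have hkk : kkr r i = ⌈r * ((νr i : ℕ):ℝ)⌉₊ := min_eq_left hceil
    have hind : 2 ^ (kkr r i) ≤ indexN (Langf a νr (kkr r)) (νr i) :=
      pow_kk_le_indexN a νr (kkr r) b hab νr_strictMono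
        (fun j => kkr_le_NNf r j) i (νr i) (le_refl _)
    have hlogb := pow_le_logb_indexN hind
    have hge : r * ((νr i : ℕ):ℝ) ≤ (kkr r i : ℝ) := by
      rw [hkk]
      exact Nat.le_ceil _
    apply ENNReal.ofReal_le_ofReal
    have hm0 : (0:ℝ) < ((νr i : ℕ):ℝ) := by
      have : (4:ℝ) ≤ ((νr i : ℕ):ℝ) := by exact_mod_cast hm4
      linarith
    rw [le_div_iff₀ hm0]
    calc r * ((νr i : ℕ):ℝ) ≤ (kkr r i : ℝ) := hge
      _ ≤ Real.logb 2 (indexN (Langf a νr (kkr r)) (νr i)) := hlogb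

end Upper3

end EntropySurj

theorem entropy_surjective {α : Type*} [Fintype α] (h : 2 ≤ Fintype.card α) :
    Function.Surjective (fun L : Set (List α) => entropy L) := by
  classical
  obtain ⟨a0, b0, hab0⟩ := Fintype.exists_pair_of_one_lt_card (show 1 < Fintype.card α by omega)
  have hab : b0 ≠ a0 := hab0.symm
  intro x
  rcases eq_or_ne x 0 with rfl | hx0
  · exact ⟨∅, EntropySurj.entropy_empty⟩
  rcases eq_or_ne x ⊤ with rfl | hxt
  · exact ⟨_, EntropySurj.entropy_top a0 b0 hab⟩
  · have hrr : 0 < x.toReal := ENNReal.toReal_pos hx0 hxt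
    refine ⟨EntropySurj.Langf a0 EntropySurj.νr (EntropySurj.kkr x.toReal), ?_⟩
    show entropy _ = x
    conv_rhs => rw [← ENNReal.ofReal_toReal hxt]
    exact le_antisymm (EntropySurj.entropy_fin_le a0 x.toReal hrr)
      (EntropySurj.entropy_fin_ge a0 x.toReal b0 hab hrr)
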